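/- Let α ≠ 1, μ_1, σ_1² ∈ ℝ, and define μ_t = ((α^t-1)/(α-1))·μ_1 and the sequence σ_t² by σ_t² = σ_1² + α·σ_{t-1}² + α·μ_{t-1}² for t ≥ 2. Then σ_t² = ((α^t-1)/(α-1))·σ_1² + (((α^{2t} - α^{t+1} + α^t - α)/(α-1) - 2(t-1)α^t)/(α-1)²)·μ_1². -/

import Mathlib

theorem sigma_recursion_closed_form (α : ℝ) (hα : α ≠ 1) (μ1 : ℝ) (μ σsq : ℕ → ℝ)
    (hμ : ∀ t, μ t = ((α ^ t - 1) / (α - 1)) * μ1)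
    (hrec : ∀ t, 2 ≤ t → σsq t = σsq 1 + α * σsq (t - 1) + α * (μ (t - 1)) ^ 2) :
    ∀ t, 1 ≤ t →
      σsq t = ((α ^ t - 1) / (α - 1)) * σsq 1 +
        (((α ^ (2 * t) - α ^ (t + 1) + α ^ t - α) / (α - 1) - 2 * ((t : ℝ) - 1) * α ^ t) /
          (α - 1) ^ 2) * μ1 ^ 2 := by
  have hne : α - 1 ≠ 0 := sub_ne_zero.mpr hα
  intro t ht
  induction t with
  | zero => omega
  | succ n ih =>
    rcases Nat.eq_or_lt_of_le ht with h | h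
    · simp only [← h]
      field_simp
      norm_num
    · have hn : 1 ≤ n := by omega
      have hIH := ih hn
      have hr := hrec (n + 1) (by omega)
      simp only [Nat.add_sub_cancel] at hr
      rw [hr, hIH, hμ]
      push_cast
      field_simp
      ring
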